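/- Let 𝒳 be a family of closed subsets of Baire space ℕ → ℕ (with the product topology) whose union is all of ℕ → ℕ. Then either some countable subfamily of 𝒳 already covers ℕ → ℕ, or the cardinality of 𝒳 is at least cov(ℳ), the covering number of the meager ideal of ℕ → ℕ. In particular, every Π⁰₁-characteristic (an uncountable cardinal κ for which some family of κ closed subsets of ℕ → ℕ covers ℕ → ℕ while no subfamily of cardinality < κ does) is at least cov(ℳ). -/
import Mathlib


open Cardinal Set

/-- The covering number of the meager ideal of a topological space:
the least cardinality of a family of meager sets covering the space. -/
noncomputable def covMeager (X : Type) [TopologicalSpace X] : Cardinal :=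
  sInf {c : Cardinal | ∃ F : Set (Set X),
    (∀ s ∈ F, IsMeagre s) ∧ ⋃₀ F = Set.univ ∧ c = #F}

namespace CovMeagerAux

attribute [local instance] Classical.propDecidable

/-- Open cylinders determined by finitely many values. -/
lemma isOpen_forall_lt (n : ℕ) (v : ℕ → ℕ) :
    IsOpen {y : ℕ → ℕ | ∀ i < n, y i = v i} := by
  have h : {y : ℕ → ℕ | ∀ i < n, y i = v i}
      = ⋂ i : Fin n, (fun y : ℕ → ℕ => y i) ⁻¹' {v i} := by
    ext y
    simp only [mem_setOf_eq, mem_iInter, mem_preimage, mem_singleton_iff]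
    exact ⟨fun h i => h i i.isLt, fun h i hi => h ⟨i, hi⟩⟩
  rw [h]
  exact isOpen_iInter_of_finite fun i =>
    (continuous_apply (i : ℕ)).isOpen_preimage _ (isOpen_discrete _)

/-- Cylinder of a finite list. -/
def Cyl (t : List ℕ) : Set (ℕ → ℕ) := {x | ∀ i < t.length, x i = t.getD i 0}

lemma isOpen_Cyl (t : List ℕ) : IsOpen (Cyl t) :=
  isOpen_forall_lt t.length fun i => t.getD i 0

variable (C : Set (ℕ → ℕ))

/-- Tree of `C`: nodes are lists whose cylinder meets `C`. -/
def TT (t : List ℕ) : Prop := (C ∩ Cyl t).Nonempty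

lemma pruned {t : List ℕ} (ht : TT C t) : ∃ k, TT C (t ++ [k]) := by
  obtain ⟨y, hyC, hyt⟩ := ht
  refine ⟨y t.length, y, hyC, ?_⟩
  intro i hi
  simp only [List.length_append, List.length_singleton] at hi
  rcases Nat.lt_succ_iff_lt_or_eq.mp hi with h | h
  · rw [List.getD_append _ _ _ _ h]
    exact hyt i h
  · subst h
    simp

noncomputable def step (t : List ℕ) (n : ℕ) : List ℕ :=
  if TT C (t ++ [n]) then t ++ [n]
  else if h : ∃ k, TT C (t ++ [k]) then t ++ [h.choose] else t ++ [0]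

lemma step_spec (t : List ℕ) (n : ℕ) :
    ∃ k, step C t n = t ++ [k] ∧ (TT C t → TT C (t ++ [k])) := by
  unfold step
  split
  · next h => exact ⟨n, rfl, fun _ => h⟩
  · split
    · next h => exact ⟨h.choose, rfl, fun _ => h.choose_spec⟩
    · next h => exact ⟨0, rfl, fun ht => absurd (pruned C ht) h⟩

noncomputable def FF (x : ℕ → ℕ) : ℕ → List ℕ
  | 0 => []
  | n + 1 => step C (FF x n) (x n)

lemma length_FF (x : ℕ → ℕ) : ∀ n, (FF C x n).length = n := by
  intro n
  induction n with
  | zero => rfl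
  | succ m ih =>
    obtain ⟨k, hk, -⟩ := step_spec C (FF C x m) (x m)
    show (step C (FF C x m) (x m)).length = m + 1
    rw [hk]
    simp [ih]

lemma prefix_FF (x : ℕ → ℕ) {m n : ℕ} (h : m ≤ n) : FF C x m <+: FF C x n := by
  induction n, h using Nat.le_induction with
  | base => exact List.prefix_refl _
  | succ n hn ih =>
    refine ih.trans ?_
    obtain ⟨k, hk, -⟩ := step_spec C (FF C x n) (x n)
    show FF C x n <+: step C (FF C x n) (x n)
    rw [hk]
    exact ⟨[k], rfl⟩

lemma getD_FF_stable (x : ℕ → ℕ) {i m n : ℕ} (him : i < m) (hmn : m ≤ n) :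
    (FF C x n).getD i 0 = (FF C x m).getD i 0 := by
  obtain ⟨u, hu⟩ := prefix_FF C x hmn
  rw [← hu, List.getD_append]
  rw [length_FF]
  exact him

lemma TT_FF (hC : C.Nonempty) (x : ℕ → ℕ) : ∀ n, TT C (FF C x n) := by
  intro n
  induction n with
  | zero =>
    obtain ⟨y, hy⟩ := hC
    exact ⟨y, hy, fun i hi => absurd hi (by simp [FF])⟩
  | succ m ih =>
    obtain ⟨k, hk, hTk⟩ := step_spec C (FF C x m) (x m)
    show TT C (step C (FF C x m) (x m))
    rw [hk]
    exact hTk ih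

noncomputable def g (x : ℕ → ℕ) : ℕ → ℕ := fun n => (FF C x (n + 1)).getD n 0

lemma g_eq (x : ℕ → ℕ) {i n : ℕ} (h : i < n) : g C x i = (FF C x n).getD i 0 :=
  (getD_FF_stable C x (Nat.lt_succ_self i) h).symm

lemma FF_congr {x z : ℕ → ℕ} : ∀ {n : ℕ}, (∀ i < n, x i = z i) → FF C x n = FF C z n := by
  intro n
  induction n with
  | zero => intro _; rfl
  | succ m ih =>
    intro h
    show step C (FF C x m) (x m) = step C (FF C z m) (z m)
    rw [ih (fun i hi => h i (hi.trans (Nat.lt_succ_self m))), h m (Nat.lt_succ_self m)]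

lemma continuous_g : Continuous (g C) := by
  refine continuous_pi fun n => continuous_discrete_rng.2 fun m => ?_
  rw [isOpen_iff_mem_nhds]
  intro x hx
  refine Filter.mem_of_superset
    ((isOpen_forall_lt (n + 1) x).mem_nhds (fun i _ => rfl)) ?_
  intro y hy
  have : FF C y (n + 1) = FF C x (n + 1) := FF_congr C fun i hi => hy i hi
  show g C y n ∈ ({m} : Set ℕ)
  have hgy : g C y n = g C x n := by
    unfold g
    rw [this]
  rw [hgy]
  exact hx

/-- Local surjectivity of `g` onto `C` above any node of the tree. -/
lemma loc_surj (n : ℕ) (x y : ℕ → ℕ) (hyC : y ∈ C)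
    (hy : ∀ i < n, y i = (FF C x n).getD i 0) :
    ∃ z : ℕ → ℕ, (∀ i < n, z i = x i) ∧ g C z = y := by
  set z : ℕ → ℕ := fun i => if i < n then x i else y i with hz
  have hzx : ∀ i < n, z i = x i := fun i hi => if_pos hi
  set pre : ℕ → List ℕ := fun m => (List.range m).map y with hpre
  have hprelen : ∀ m, (pre m).length = m := by intro m; simp [hpre]
  have hpreD : ∀ m, ∀ i < m, (pre m).getD i 0 = y i := by
    intro m i hi
    rw [List.getD_eq_getElem _ _ (by simp [hpre, hi])]
    simp [hpre]
  have hpresucc : ∀ m, pre (m + 1) = pre m ++ [y m] := by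
    intro m
    simp [hpre, List.range_succ]
  have key : ∀ m, n ≤ m → FF C z m = pre m := by
    intro m hm
    induction m, hm using Nat.le_induction with
    | base =>
      have h1 : FF C z n = FF C x n := FF_congr C fun i hi => hzx i hi
      rw [h1]
      refine List.ext_getElem (by rw [length_FF, hprelen]) ?_
      intro i h1i h2i
      rw [length_FF] at h1i
      rw [← List.getD_eq_getElem _ 0, ← List.getD_eq_getElem _ 0,
        hpreD n i h1i, hy i h1i]
    | succ m hm ih =>
      have hzm : z m = y m := if_neg (by omega)
      show step C (FF C z m) (z m) = pre (m + 1)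
      rw [ih, hzm]
      have hT : TT C (pre m ++ [y m]) := by
        refine ⟨y, hyC, ?_⟩
        rw [← hpresucc]
        intro i hi
        rw [hprelen] at hi
        exact (hpreD (m + 1) i hi).symm
      unfold step
      rw [if_pos hT, hpresucc]
  refine ⟨z, hzx, ?_⟩
  funext i
  have h1 : i < max n (i + 1) := lt_of_lt_of_le (Nat.lt_succ_self i) (le_max_right _ _)
  rw [g_eq C z h1, key (max n (i + 1)) (le_max_left _ _), hpreD _ i h1]

/-- In Baire space, every open set containing a point contains a cylinder around it. -/
lemma exists_cyl_subset {U : Set (ℕ → ℕ)} (hU : IsOpen U) {x : ℕ → ℕ} (hx : x ∈ U) :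
    ∃ n, {y : ℕ → ℕ | ∀ i < n, y i = x i} ⊆ U := by
  obtain ⟨I, u, hu, hsub⟩ := isOpen_pi_iff.1 hU x hx
  refine ⟨(I.sup id) + 1, fun y hy => hsub ?_⟩
  intro i hi
  have h1 : (i : ℕ) < I.sup id + 1 :=
    lt_of_le_of_lt (Finset.le_sup (f := id) hi) (Nat.lt_succ_self _)
  rw [hy i h1]
  exact (hu i hi).2

lemma meagre_preimage (hC : C.Nonempty) {A : Set (ℕ → ℕ)} (hA : IsClosed A)
    (hstar : ∀ V : Set (ℕ → ℕ), IsOpen V → (V ∩ C).Nonempty → ¬(V ∩ C ⊆ A)) :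
    IsMeagre (g C ⁻¹' A) := by
  have hclp : IsClosed (g C ⁻¹' A) := hA.preimage (continuous_g C)
  have hint : interior (g C ⁻¹' A) = ∅ := by
    by_contra h
    obtain ⟨x, hx⟩ := Set.nonempty_iff_ne_empty.2 h
    obtain ⟨n, hn⟩ := exists_cyl_subset isOpen_interior hx
    have hsub : {y : ℕ → ℕ | ∀ i < n, y i = x i} ⊆ g C ⁻¹' A :=
      hn.trans interior_subset
    refine hstar (Cyl (FF C x n)) (isOpen_Cyl _) ?_ ?_
    · obtain ⟨y, hy1, hy2⟩ := TT_FF C hC x n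
      exact ⟨y, hy2, hy1⟩
    · rintro y ⟨hyV, hyC⟩
      obtain ⟨z, hz1, hz2⟩ := loc_surj C n x y hyC
        (fun i hi => hyV i (by rw [length_FF]; exact hi))
      have hzA : z ∈ g C ⁻¹' A := hsub hz1
      rw [mem_preimage, hz2] at hzA
      exact hzA
  rw [isMeagre_iff_countable_union_isNowhereDense]
  refine ⟨{g C ⁻¹' A}, ?_, countable_singleton _, by simp⟩
  rintro t rfl
  rw [IsNowhereDense, hclp.closure_eq, hint]

end CovMeagerAux

theorem closed_cover_countable_or_covMeager_le :
    (∀ 𝒳 : Set (Set (ℕ → ℕ)), (∀ A ∈ 𝒳, IsClosed A) → ⋃₀ 𝒳 = Set.univ →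
      ((∃ 𝒳' ⊆ 𝒳, 𝒳'.Countable ∧ ⋃₀ 𝒳' = Set.univ) ∨
        covMeager (ℕ → ℕ) ≤ #𝒳)) ∧
    (∀ κ : Cardinal, Cardinal.aleph0 < κ →
      (∃ 𝒳 : Set (Set (ℕ → ℕ)), (∀ A ∈ 𝒳, IsClosed A) ∧ ⋃₀ 𝒳 = Set.univ ∧ #𝒳 = κ ∧
        ∀ 𝒳' ⊆ 𝒳, #𝒳' < κ → ⋃₀ 𝒳' ≠ Set.univ) →
      covMeager (ℕ → ℕ) ≤ κ) := by
  have part1 : ∀ 𝒳 : Set (Set (ℕ → ℕ)), (∀ A ∈ 𝒳, IsClosed A) → ⋃₀ 𝒳 = Set.univ →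
      ((∃ 𝒳' ⊆ 𝒳, 𝒳'.Countable ∧ ⋃₀ 𝒳' = Set.univ) ∨
        covMeager (ℕ → ℕ) ≤ #𝒳) := by
    intro 𝒳 hcl hcov
    classical
    set S : Set (Set (ℕ → ℕ)) :=
      {V | IsOpen V ∧ ∃ 𝒢, 𝒢 ⊆ 𝒳 ∧ 𝒢.Countable ∧ V ⊆ ⋃₀ 𝒢} with hS
    obtain ⟨T, hTc, hTS, hTU⟩ := TopologicalSpace.isOpen_sUnion_countable S fun s hs => hs.1
    choose! 𝒢 h𝒢sub h𝒢c h𝒢cov using fun V (hV : V ∈ T) => (hTS hV).2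
    set G : Set (Set (ℕ → ℕ)) := ⋃ V ∈ T, 𝒢 V with hG
    have hGsub : G ⊆ 𝒳 := by
      rintro B hB
      simp only [hG, mem_iUnion] at hB
      obtain ⟨V, hV, hB⟩ := hB
      exact h𝒢sub V hV hB
    have hGc : G.Countable := hTc.biUnion fun V hV => h𝒢c V hV
    have hWG : ⋃₀ S ⊆ ⋃₀ G := by
      intro x hx
      rw [← hTU] at hx
      obtain ⟨V, hV, hxV⟩ := hx
      obtain ⟨B, hB, hxB⟩ := h𝒢cov V hV hxV
      exact ⟨B, by simp only [hG, mem_iUnion]; exact ⟨V, hV, hB⟩, hxB⟩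
    by_cases hW : ⋃₀ S = Set.univ
    · left
      exact ⟨G, hGsub, hGc, subset_antisymm (subset_univ _) (hW ▸ hWG)⟩
    · right
      set C : Set (ℕ → ℕ) := (⋃₀ S)ᶜ with hC
      have hCne : C.Nonempty := Set.nonempty_compl.2 hW
      have hstar : ∀ V : Set (ℕ → ℕ), IsOpen V → (V ∩ C).Nonempty →
          ∀ A ∈ 𝒳, ¬(V ∩ C ⊆ A) := by
        rintro V hV ⟨x, hxV, hxC⟩ A hA hsub
        have hVS : V ∈ S := by
          refine ⟨hV, G ∪ {A}, ?_, hGc.union (countable_singleton A), ?_⟩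
          · exact union_subset hGsub (by simpa using hA)
          · intro y hy
            by_cases hyC : y ∈ C
            · exact ⟨A, Or.inr rfl, hsub ⟨hy, hyC⟩⟩
            · have : y ∈ ⋃₀ S := not_not.1 hyC
              obtain ⟨B, hB, hyB⟩ := hWG this
              exact ⟨B, Or.inl hB, hyB⟩
        exact hxC (subset_sUnion_of_mem hVS hxV)
      have hcov' : ⋃₀ ((fun A => CovMeagerAux.g C ⁻¹' A) '' 𝒳) = Set.univ := by
        refine subset_antisymm (subset_univ _) ?_
        intro x _
        have : CovMeagerAux.g C x ∈ ⋃₀ 𝒳 := hcov ▸ mem_univ _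
        obtain ⟨A, hA, hgA⟩ := this
        exact ⟨CovMeagerAux.g C ⁻¹' A, ⟨A, hA, rfl⟩, hgA⟩
      have hle : covMeager (ℕ → ℕ) ≤ #((fun A => CovMeagerAux.g C ⁻¹' A) '' 𝒳) := by
        refine csInf_le' ⟨(fun A => CovMeagerAux.g C ⁻¹' A) '' 𝒳, ?_, hcov', rfl⟩
        rintro s ⟨A, hA, rfl⟩
        exact CovMeagerAux.meagre_preimage C hCne (hcl A hA)
          fun V hV hne => hstar V hV hne A hA
      exact hle.trans Cardinal.mk_image_le
  refine ⟨part1, ?_⟩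
  rintro κ hκ ⟨𝒳, hcl, hcov, hcard, hmin⟩
  rcases part1 𝒳 hcl hcov with ⟨𝒳', hsub, hc, hU⟩ | hle
  · exfalso
    have h1 : #𝒳' ≤ Cardinal.aleph0 := by
      have := hc.to_subtype
      exact Cardinal.mk_le_aleph0
    exact hmin 𝒳' hsub (lt_of_le_of_lt h1 hκ) hU
  · exact hcard ▸ hle
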